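/- For all real $s \geq 1$, $1 < \frac{\sqrt{s}\,\Gamma(s - 1/2)}{\Gamma(s)} \leq \sqrt{\pi}$. -/

import Mathlib

open Real Filter

noncomputable def gg (x : ℝ) : ℝ := x * (Real.Gamma (x - 1/2))^2 / (Real.Gamma x)^2
noncomputable def RR (x : ℝ) : ℝ := x^3 / ((x - 1/2)^2 * (x + 1))

lemma sq_gamma_le {a b : ℝ} (ha : 0 < a) (hb : 0 < b) :
    Real.Gamma ((a + b) / 2) ^ 2 ≤ Real.Gamma a * Real.Gamma b := by
  have h := Real.convexOn_log_Gamma.2 (Set.mem_Ioi.2 ha) (Set.mem_Ioi.2 hb)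
      (by norm_num : (0:ℝ) ≤ 1/2) (by norm_num : (0:ℝ) ≤ 1/2) (by norm_num)
  simp only [Function.comp, smul_eq_mul] at h
  have hc : (0:ℝ) < (a + b) / 2 := by linarith
  have hga := Real.Gamma_pos_of_pos ha
  have hgb := Real.Gamma_pos_of_pos hb
  have hgc := Real.Gamma_pos_of_pos hc
  rw [show 1/2 * a + 1/2 * b = (a + b)/2 by ring] at h
  rw [← Real.log_le_log_iff (by positivity) (by positivity), Real.log_pow,
    Real.log_mul (ne_of_gt hga) (ne_of_gt hgb)]
  push_cast
  linarith

lemma gamma_half_rec {x : ℝ} (hx : 1/2 < x) :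
    Real.Gamma (x + 1/2) = (x - 1/2) * Real.Gamma (x - 1/2) := by
  have h1 : x - 1/2 ≠ 0 := ne_of_gt (by linarith : (0:ℝ) < x - 1/2)
  have := Real.Gamma_add_one h1
  rw [show x - 1/2 + 1 = x + 1/2 by ring] at this
  exact this

lemma gg_ge {x : ℝ} (hx : 1/2 < x) : x / (x - 1/2) ≤ gg x := by
  have h1 : (0:ℝ) < x - 1/2 := by linarith
  have h2 : (0:ℝ) < x + 1/2 := by linarith
  have h := sq_gamma_le h1 h2
  rw [show ((x - 1/2) + (x + 1/2)) / 2 = x by ring, gamma_half_rec hx] at h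
  have hg := Real.Gamma_pos_of_pos (show (0:ℝ) < x by linarith)
  rw [gg, div_le_div_iff₀ h1 (by positivity)]
  nlinarith [Real.Gamma_pos_of_pos h1]

lemma gg_le {x : ℝ} (hx : 1 < x) : gg x ≤ x / (x - 1) := by
  have h1 : (0:ℝ) < x - 1 := by linarith
  have hx0 : (0:ℝ) < x := by linarith
  have h := sq_gamma_le h1 hx0
  rw [show ((x - 1) + x) / 2 = x - 1/2 by ring] at h
  have hrec : Real.Gamma x = (x - 1) * Real.Gamma (x - 1) := by
    have := Real.Gamma_add_one (ne_of_gt h1)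
    rw [sub_add_cancel] at this
    exact this
  have hg := Real.Gamma_pos_of_pos hx0
  have hg1 := Real.Gamma_pos_of_pos h1
  rw [gg, div_le_div_iff₀ (by positivity) h1]
  rw [hrec] at h ⊢
  nlinarith [mul_le_mul_of_nonneg_left h (show (0:ℝ) ≤ x * (x-1) by positivity)]

lemma gg_pos {x : ℝ} (hx : 1/2 < x) : 0 < gg x := by
  have h1 : (0:ℝ) < x - 1/2 := by linarith
  have := Real.Gamma_pos_of_pos h1
  have := Real.Gamma_pos_of_pos (show (0:ℝ) < x by linarith)
  rw [gg]; positivity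

lemma gg_rec {x : ℝ} (hx : 1/2 < x) : gg x = RR x * gg (x + 1) := by
  have h1 : (0:ℝ) < x - 1/2 := by linarith
  have hx0 : (0:ℝ) < x := by linarith
  have hg := Real.Gamma_pos_of_pos hx0
  have hgne : Real.Gamma x ≠ 0 := ne_of_gt hg
  have hxne : x ≠ 0 := ne_of_gt hx0
  have h1ne : x - 1/2 ≠ 0 := ne_of_gt h1
  have h2ne : x + 1 ≠ 0 := by positivity
  have hrecx : Real.Gamma (x + 1) = x * Real.Gamma x := Real.Gamma_add_one hxne
  have hrech : Real.Gamma (x + 1 - 1/2) = (x - 1/2) * Real.Gamma (x - 1/2) := by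
    rw [show x + 1 - 1/2 = x + 1/2 by ring]
    exact gamma_half_rec hx
  rw [gg, gg, RR, hrecx, hrech, div_mul_div_comm,
    div_eq_div_iff (ne_of_gt (pow_pos hg 2))
      (ne_of_gt <| mul_pos (mul_pos (pow_pos h1 2) (by linarith : (0:ℝ) < x + 1))
        (pow_pos (mul_pos hx0 hg) 2))]
  ring

lemma RR_anti {a b : ℝ} (ha : 1 ≤ a) (hab : a ≤ b) : RR b ≤ RR a := by
  have ha2 : (0:ℝ) < (a - 1/2)^2 * (a + 1) := by nlinarith
  have hb2 : (0:ℝ) < (b - 1/2)^2 * (b + 1) := by nlinarith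
  rw [RR, RR, div_le_div_iff₀ hb2 ha2]
  have key : 0 ≤ (b - a) * (3*a*b*(a+b) - (a^2 + a*b + b^2)) := by
    apply mul_nonneg (by linarith)
    nlinarith [mul_nonneg (sub_nonneg.2 ha) (sub_nonneg.2 (ha.trans hab))]
  nlinarith [key]

lemma RR_pos {x : ℝ} (hx : 1/2 < x) : 0 < RR x := by
  rw [RR]
  have h1 : (0:ℝ) < x - 1/2 := by linarith
  have h2 : (0:ℝ) < x + 1 := by linarith
  positivity

lemma gg_prod (x : ℝ) (hx : 1/2 < x) (n : ℕ) :
    gg x = (∏ k ∈ Finset.range n, RR (x + k)) * gg (x + n) := by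
  induction n with
  | zero => simp
  | succ n ih =>
    rw [Finset.prod_range_succ, ih, mul_assoc]
    congr 1
    have hp : (1:ℝ)/2 < x + n := by
      have : (0:ℝ) ≤ n := Nat.cast_nonneg n
      linarith
    rw [gg_rec hp]
    push_cast
    ring_nf

lemma gg_tendsto (x : ℝ) (hx : 1/2 < x) :
    Tendsto (fun n : ℕ => ∏ k ∈ Finset.range n, RR (x + k)) atTop (nhds (gg x)) := by
  have hposn : ∀ n : ℕ, (1:ℝ)/2 < x + n := by
    intro n
    have : (0:ℝ) ≤ n := Nat.cast_nonneg n
    linarith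
  have key : ∀ n : ℕ, (∏ k ∈ Finset.range n, RR (x + k)) = gg x / gg (x + n) := by
    intro n
    rw [eq_div_iff (ne_of_gt (gg_pos (hposn n)))]
    exact (gg_prod x hx n).symm
  simp only [key]
  have hden : Tendsto (fun n : ℕ => gg (x + n)) atTop (nhds 1) := by
    have hlow : ∀ n : ℕ, (1:ℝ) ≤ gg (x + n) := by
      intro n
      have hp := hposn n
      have h1 : (0:ℝ) < x + n - 1/2 := by linarith
      have h2 : (1:ℝ) ≤ (x + n) / (x + n - 1/2) := by
        rw [le_div_iff₀ h1]; linarith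
      linarith [gg_ge hp]
    have hupatop : Tendsto (fun n : ℕ => x + (n:ℝ) - 1) atTop atTop := by
      apply tendsto_atTop_add_const_right
      exact tendsto_atTop_add_const_left _ x tendsto_natCast_atTop_atTop
    have hup : Tendsto (fun n : ℕ => (x + n) / (x + n - 1)) atTop (nhds 1) := by
      have h0 : Tendsto (fun n : ℕ => 1 + 1 / (x + (n:ℝ) - 1)) atTop (nhds 1) := by
        have hd : Tendsto (fun n : ℕ => 1 / (x + (n:ℝ) - 1)) atTop (nhds 0) :=
          Tendsto.div_atTop tendsto_const_nhds hupatop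
        simpa using (tendsto_const_nhds : Tendsto (fun _ : ℕ => (1:ℝ)) atTop (nhds 1)).add hd
      apply h0.congr'
      filter_upwards [eventually_gt_atTop 1] with n hn
      have hn1 : (1:ℝ) < n := by exact_mod_cast hn
      have hne : (0:ℝ) < x + n - 1 := by linarith
      field_simp
      ring
    apply tendsto_of_tendsto_of_tendsto_of_le_of_le' tendsto_const_nhds hup
    · exact Eventually.of_forall hlow
    · filter_upwards [eventually_gt_atTop 0] with n hn
      have hn1 : (1:ℝ) ≤ n := by exact_mod_cast hn
      exact gg_le (by linarith : (1:ℝ) < x + n)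
  have h := Tendsto.div (tendsto_const_nhds : Tendsto (fun _ : ℕ => gg x) atTop (nhds (gg x)))
    hden one_ne_zero
  rw [div_one] at h
  exact h

lemma gg_one : gg 1 = π := by
  rw [gg]
  norm_num [Real.Gamma_one, Real.Gamma_one_half_eq, Real.sq_sqrt Real.pi_pos.le]

theorem gamma_ratio_bounds (s : ℝ) (hs : 1 ≤ s) :
    1 < Real.sqrt s * Real.Gamma (s - 1/2) / Real.Gamma s ∧
      Real.sqrt s * Real.Gamma (s - 1/2) / Real.Gamma s ≤ Real.sqrt π := by
  have hs2 : (1:ℝ)/2 < s := by linarith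
  have h1 : (0:ℝ) < s - 1/2 := by linarith
  have hs0 : (0:ℝ) < s := by linarith
  have hg := Real.Gamma_pos_of_pos hs0
  have hgh := Real.Gamma_pos_of_pos h1
  set f := Real.sqrt s * Real.Gamma (s - 1/2) / Real.Gamma s with hf
  have hsqpos : 0 < Real.sqrt s := Real.sqrt_pos.2 hs0
  have hfpos : 0 < f := by rw [hf]; positivity
  have hfsq : f ^ 2 = gg s := by
    rw [hf, gg, div_pow, mul_pow, Real.sq_sqrt hs0.le]
  have hlow : 1 < gg s := by
    have h2 : (1:ℝ) < s / (s - 1/2) := by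
      rw [lt_div_iff₀ h1]; linarith
    linarith [gg_ge hs2]
  have hupper : gg s ≤ π := by
    have hcomp : ∀ n : ℕ, (∏ k ∈ Finset.range n, RR (s + k)) ≤ ∏ k ∈ Finset.range n, RR (1 + k) := by
      intro n
      apply Finset.prod_le_prod
      · intro k _
        have : (1:ℝ)/2 < s + k := by
          have : (0:ℝ) ≤ k := Nat.cast_nonneg k
          linarith
        exact (RR_pos this).le
      · intro k _
        apply RR_anti
        · have : (0:ℝ) ≤ k := Nat.cast_nonneg k
          linarith
        · linarith
    have h1t := gg_tendsto 1 (by norm_num)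
    have hst := gg_tendsto s hs2
    have := le_of_tendsto_of_tendsto' hst h1t hcomp
    rwa [gg_one] at this
  constructor
  · nlinarith
  · have hfe : f = Real.sqrt (f ^ 2) := (Real.sqrt_sq hfpos.le).symm
    rw [hfe, hfsq]
    exact Real.sqrt_le_sqrt hupper
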